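/- Let T : ℝ^n → ℝ^n be a continuously differentiable, μ-symmetric 1-tensor-valued map. Then for every μ ∈ ℝ^n and all indices i_1, i_2 ∈ {1,…,n}: D_1T(μ)^{i_1 i_2} = ∫_0^1 [ (∇T)^{i_1 i_1}(ν_t) − (∇T)^{i_1 i_2}(ν_t) ] dt, where ν_t = μ + t(μ_{i_2} − μ_{i_1})(e^{i_1} − e^{i_2}), i.e. ν_t agrees with μ except that its i_1-coordinate is μ_{i_1} + t(μ_{i_2} − μ_{i_1}) and its i_2-coordinate is μ_{i_2} + t(μ_{i_1} − μ_{i_2}). -/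

import Mathlib

noncomputable section

/-- The Jacobian matrix of a map `T : ℝ^n → ℝ^n`: `(∇T)^{ij}(μ) = ∂T^i(μ)/∂μ_j`. -/
def Jac {n : ℕ} (T : (Fin n → ℝ) → (Fin n → ℝ)) (μ : Fin n → ℝ) (i j : Fin n) : ℝ :=
  fderiv ℝ T μ (Pi.single j 1) i

/-- Lemma 7.1: integral representation of the matrix `D₁T(μ)` for a continuously
differentiable `μ`-symmetric map `T : ℝ^n → ℝ^n`. -/
theorem statement18 {n : ℕ} (T : (Fin n → ℝ) → (Fin n → ℝ))
    (hT : ContDiff ℝ 1 T)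
    (hsymm : ∀ (μ : Fin n → ℝ) (π : Equiv.Perm (Fin n)), T (μ ∘ π) = T μ ∘ π) :
    ∀ (μ : Fin n → ℝ) (i₁ i₂ : Fin n),
      (if i₁ = i₂ then (0 : ℝ)
        else if μ i₁ = μ i₂ then Jac T μ i₁ i₁ - Jac T μ i₁ i₂
        else (T μ i₂ - T μ i₁) / (μ i₂ - μ i₁)) =
      ∫ t in (0 : ℝ)..1,
        (Jac T (fun j => μ j + t * (μ i₂ - μ i₁) *
            ((if j = i₁ then (1 : ℝ) else 0) - if j = i₂ then (1 : ℝ) else 0)) i₁ i₁ -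
          Jac T (fun j => μ j + t * (μ i₂ - μ i₁) *
            ((if j = i₁ then (1 : ℝ) else 0) - if j = i₂ then (1 : ℝ) else 0)) i₁ i₂) := by
  intro μ i₁ i₂
  by_cases h12 : i₁ = i₂
  · subst h12
    simp
  rw [if_neg h12]
  by_cases heq : μ i₁ = μ i₂
  · rw [if_pos heq]
    have : ∀ t : ℝ, (fun j => μ j + t * (μ i₂ - μ i₁) *
        ((if j = i₁ then (1 : ℝ) else 0) - if j = i₂ then (1 : ℝ) else 0)) = μ := by
      intro t; funext j; rw [heq]; ring
    simp only [this]
    simp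
  rw [if_neg heq]
  have hc : μ i₂ - μ i₁ ≠ 0 := sub_ne_zero.mpr (Ne.symm heq)
  set c : ℝ := μ i₂ - μ i₁ with hcdef
  set w : Fin n → ℝ := c • (Pi.single i₁ (1:ℝ) - Pi.single i₂ 1) with hw
  have hνeq : ∀ t : ℝ, (fun j => μ j + t * c *
      ((if j = i₁ then (1 : ℝ) else 0) - if j = i₂ then (1 : ℝ) else 0)) = μ + t • w := by
    intro t; funext j
    simp only [hw, Pi.add_apply, Pi.smul_apply, Pi.sub_apply, Pi.single_apply, smul_eq_mul]
    ring
  have hdiff : Differentiable ℝ T := hT.differentiable one_ne_zero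
  -- derivative of the path composed with T
  have hderiv : ∀ t : ℝ, HasDerivAt (fun s : ℝ => T (μ + s • w) i₁)
      (c * (Jac T (μ + t • w) i₁ i₁ - Jac T (μ + t • w) i₁ i₂)) t := by
    intro t
    have hpath : HasDerivAt (fun s : ℝ => μ + s • w) w t := by
      simpa using ((hasDerivAt_id t).smul_const w).const_add μ
    have h1 : HasDerivAt (fun s : ℝ => T (μ + s • w)) (fderiv ℝ T (μ + t • w) w) t :=
      (hdiff (μ + t • w)).hasFDerivAt.comp_hasDerivAt t hpath
    have h2 := (hasDerivAt_pi.mp h1) i₁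
    have : fderiv ℝ T (μ + t • w) w i₁
        = c * (Jac T (μ + t • w) i₁ i₁ - Jac T (μ + t • w) i₁ i₂) := by
      rw [hw, map_smul, map_sub]
      simp [Jac]
    rwa [this] at h2
  have hcont : Continuous fun t : ℝ =>
      c * (Jac T (μ + t • w) i₁ i₁ - Jac T (μ + t • w) i₁ i₂) := by
    have h1 : Continuous (fderiv ℝ T) := hT.continuous_fderiv one_ne_zero
    have hν : Continuous fun t : ℝ => μ + t • w := by continuity
    unfold Jac
    exact continuous_const.mul
      (((continuous_apply i₁).comp ((h1.comp hν).clm_apply continuous_const)).sub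
        ((continuous_apply i₁).comp ((h1.comp hν).clm_apply continuous_const)))
  have key : ∫ t in (0:ℝ)..1, c * (Jac T (μ + t • w) i₁ i₁ - Jac T (μ + t • w) i₁ i₂)
      = T (μ + (1:ℝ) • w) i₁ - T (μ + (0:ℝ) • w) i₁ :=
    intervalIntegral.integral_eq_sub_of_hasDerivAt (fun t _ => hderiv t)
      (hcont.intervalIntegrable 0 1)
  have h0 : μ + (0:ℝ) • w = μ := by simp
  have h1v : μ + (1:ℝ) • w = μ ∘ (Equiv.swap i₁ i₂) := by
    funext j
    simp only [hw, Pi.add_apply, Pi.smul_apply, Pi.sub_apply, Pi.single_apply, one_smul,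
      smul_eq_mul, Function.comp_apply]
    rcases eq_or_ne j i₁ with rfl | hj1
    · rw [Equiv.swap_apply_left]
      simp [h12, hcdef]
    rcases eq_or_ne j i₂ with rfl | hj2
    · rw [Equiv.swap_apply_right]
      simp [hj1, hcdef]
    · rw [Equiv.swap_apply_of_ne_of_ne hj1 hj2]
      simp [hj1, hj2]
  have hT1 : T (μ + (1:ℝ) • w) i₁ = T μ i₂ := by
    rw [h1v, hsymm μ (Equiv.swap i₁ i₂)]
    simp
  rw [h0, hT1] at key
  rw [intervalIntegral.integral_const_mul] at key
  have := key
  simp only [hνeq]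
  rw [div_eq_iff hc, ← this]
  ring
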